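/- For every positive integer n, exactly 2 elements of the quaternion ring H(ℤ_{2^n}) can be written as a product of idempotents. -/

import Mathlib

open Quaternion

lemma nil2 (n : ℕ) : IsNilpotent (2 : ZMod (2^n)) := by
  refine ⟨n, ?_⟩
  have : ((2^n : ℕ) : ZMod (2^n)) = 0 := ZMod.natCast_self _
  push_cast at this
  exact this

lemma unit_or_nil (n : ℕ) (a : ZMod (2^n)) : IsUnit a ∨ IsNilpotent a := by
  rcases Nat.even_or_odd a.val with ⟨m, hm⟩ | ho
  · right
    have ha : ((a.val : ℕ) : ZMod (2^n)) = a := by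
      rw [ZMod.natCast_val, ZMod.cast_id]
    have : a = 2 * (m : ZMod (2^n)) := by
      rw [← ha, hm]; push_cast; ring
    rw [this]
    exact (Commute.all _ _).isNilpotent_mul_right (nil2 n)
  · left
    have : Nat.Coprime a.val (2^n) := by
      apply Nat.Coprime.pow_right
      rw [Nat.coprime_two_right]
      exact ho
    have := (ZMod.isUnit_iff_coprime a.val (2^n)).mpr this
    rwa [ZMod.natCast_val, ZMod.cast_id] at this

lemma zmod_idem (n : ℕ) (a : ZMod (2^n)) (h : a * a = a) : a = 0 ∨ a = 1 := by
  rcases unit_or_nil n a with hu | ⟨k, hk⟩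
  · right
    exact hu.mul_left_cancel (by rw [h, mul_one])
  · left
    have hpow : ∀ m : ℕ, a ^ (m + 1) = a := by
      intro m
      induction m with
      | zero => simp
      | succ m ih => rw [pow_succ, ih, h]
    calc a = a ^ (k + 1) := (hpow k).symm
    _ = a ^ k * a := pow_succ a k
    _ = 0 := by rw [hk, zero_mul]

lemma quat_idem (n : ℕ) (e : ℍ[ZMod (2^n)]) (h : IsIdempotentElem e) :
    e = 0 ∨ e = 1 := by
  have hmul : e * e = e := h
  have h2 : e.imI * (2 * e.re - 1) = 0 := by
    have := congrArg QuaternionAlgebra.imI hmul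
    simp [QuaternionAlgebra.imI_mul] at this
    linear_combination this
  have h3 : e.imJ * (2 * e.re - 1) = 0 := by
    have := congrArg QuaternionAlgebra.imJ hmul
    simp [QuaternionAlgebra.imJ_mul] at this
    linear_combination this
  have h4 : e.imK * (2 * e.re - 1) = 0 := by
    have := congrArg QuaternionAlgebra.imK hmul
    simp [QuaternionAlgebra.imK_mul] at this
    linear_combination this
  have hu : IsUnit (2 * e.re - 1) :=
    (((Commute.all _ _).isNilpotent_mul_right (nil2 n)) : IsNilpotent (2 * e.re)).isUnit_sub_one
  have hI : e.imI = 0 := hu.mul_right_cancel (by rw [h2, zero_mul])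
  have hJ : e.imJ = 0 := hu.mul_right_cancel (by rw [h3, zero_mul])
  have hK : e.imK = 0 := hu.mul_right_cancel (by rw [h4, zero_mul])
  have hre : e.re * e.re = e.re := by
    have := congrArg QuaternionAlgebra.re hmul
    simp [QuaternionAlgebra.re_mul, hI, hJ, hK] at this
    linear_combination this
  rcases zmod_idem n e.re hre with h0 | h1
  · left; ext <;> simp [h0, hI, hJ, hK]
  · right; ext <;> simp [h1, hI, hJ, hK]

/-- For every positive integer `n`, exactly `2` elements of the quaternion ring
`H(ℤ_{2^n})` can be written as a product of idempotents. -/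
theorem card_products_of_idempotents_quaternion_zmod_two_pow (n : ℕ) (hn : 0 < n) :
    Set.ncard {z : ℍ[ZMod (2 ^ n)] | ∃ l : List ℍ[ZMod (2 ^ n)], l ≠ [] ∧
      (∀ e ∈ l, IsIdempotentElem e) ∧ z = l.prod} = 2 := by
  haveI : Fact (1 < 2 ^ n) := ⟨Nat.one_lt_two_pow (by omega)⟩
  have hset : {z : ℍ[ZMod (2 ^ n)] | ∃ l : List ℍ[ZMod (2 ^ n)], l ≠ [] ∧
      (∀ e ∈ l, IsIdempotentElem e) ∧ z = l.prod} = {0, 1} := by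
    ext z
    constructor
    · rintro ⟨l, -, hl, rfl⟩
      clear hn
      induction l with
      | nil => right; rfl
      | cons a t ih =>
        have ha := quat_idem n a (hl a (by simp))
        have ht := ih (fun e he => hl e (by simp [he]))
        rcases ha with rfl | rfl <;> rcases ht with ht | ht <;>
          simp [List.prod_cons, ht]
    · rintro (rfl | rfl)
      · exact ⟨[0], by simp, by simp [IsIdempotentElem], by simp⟩
      · exact ⟨[1], by simp, by simp [IsIdempotentElem], by simp⟩
  rw [hset]
  refine Set.ncard_pair ?_
  intro h
  have : (0 : ZMod (2^n)) = 1 := congrArg QuaternionAlgebra.re h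
  exact zero_ne_one this
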